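/- Let F_m be the free group on x_1,…,x_m, let n ≥ 1, and let u_1,…,u_n ∈ {x_1,…,x_m}. Then the orbit of the tuple u = (u_1,…,u_n) under the Hurwitz action of the braid group B_n on F_m^n is exactly the set of tuples (f_1,…,f_n) ∈ F_m^n such that f_1⋯f_n = u_1⋯u_n and there exists a permutation τ ∈ S_n with f_k conjugate to u_{τ(k)} in F_m for every k. -/

import Mathlib

/-- Defining relations of the braid group on `n` strands: the Artin generators are
`σ_0, …, σ_{n-2}` (`0`-based), indexed by `Fin (n-1)`. -/
def braidRels (n : ℕ) : Set (FreeGroup (Fin (n - 1))) :=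
  {r | ∃ i j : Fin (n - 1),
    (((j : ℕ) = (i : ℕ) + 1) ∧
      r = FreeGroup.of i * FreeGroup.of j * FreeGroup.of i *
        (FreeGroup.of j * FreeGroup.of i * FreeGroup.of j)⁻¹) ∨
    (((i : ℕ) + 2 ≤ (j : ℕ)) ∧
      r = FreeGroup.of i * FreeGroup.of j * (FreeGroup.of j * FreeGroup.of i)⁻¹)}

/-- The braid group on `n` strands, as a presented group. -/
abbrev BraidGroup (n : ℕ) := PresentedGroup (braidRels n)

/-- The Artin generator `σ_i` of the braid group (`0`-based index `i : Fin (n-1)`). -/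
def braidGen {n : ℕ} (i : Fin (n - 1)) : BraidGroup n := PresentedGroup.of i

/-- The Artin generator `σ_k` for a natural number index `k` (`0`-based);
equal to `1` if `k` is out of range. -/
def braidGen' (n k : ℕ) : BraidGroup n :=
  if h : k < n - 1 then braidGen ⟨k, h⟩ else 1

/-- The Birman–Ko–Lee generator `a_{ij}` (`0`-based): for `i < j`,
`a_{ij} = σ_i σ_{i+1} ⋯ σ_{j-2} σ_{j-1} σ_{j-2}⁻¹ ⋯ σ_{i+1}⁻¹ σ_i⁻¹`. -/
def bkl (n i j : ℕ) : BraidGroup n :=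
  (((List.range (j - 1 - i)).map fun t => braidGen' n (i + t)).prod) *
    braidGen' n (j - 1) *
    (((List.range (j - 1 - i)).map fun t => braidGen' n (i + t)).prod)⁻¹

/-- The strand index `i` as an element of `Fin n` (from `i : Fin (n-1)`). -/
def finLo {n : ℕ} (i : Fin (n - 1)) : Fin n := ⟨i, by have := i.isLt; omega⟩

/-- The strand index `i+1` as an element of `Fin n` (from `i : Fin (n-1)`). -/
def finHi {n : ℕ} (i : Fin (n - 1)) : Fin n := ⟨(i : ℕ) + 1, by have := i.isLt; omega⟩

/-- The Hurwitz move corresponding to the braid generator `σ_i`: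
`σ_i · (g_1,…,g_n) = (g_1,…,g_{i-1}, g_{i+1}, g_{i+1}⁻¹ g_i g_{i+1}, g_{i+2},…,g_n)`. -/
def hurwitzMove {G : Type*} [Group G] {n : ℕ} (i : Fin (n - 1)) (g : Fin n → G) :
    Fin n → G := fun k =>
  if k = finLo i then g (finHi i)
  else if k = finHi i then (g (finHi i))⁻¹ * g (finLo i) * g (finHi i)
  else g k

set_option linter.unusedSectionVars false
section HurwitzAux

namespace HurwitzAux
open FreeGroup List

variable {α : Type*} [DecidableEq α]

/-- cancellation relation on adjacent letters -/
def Cl (a b : α × Bool) : Prop := a.1 = b.1 ∧ a.2 = !b.2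

instance (a b : α × Bool) : Decidable (Cl a b) := by unfold Cl; infer_instance

/-- a word is reduced -/
def RW (w : List (α × Bool)) : Prop := List.Chain' (fun a b => ¬ Cl a b) w

instance (w : List (α × Bool)) : Decidable (RW w) := by unfold RW; exact inferInstanceAs (Decidable (List.IsChain _ w))

omit [DecidableEq α] in
lemma rw_tail {w : List (α × Bool)} (h : RW w) : RW w.tail := List.IsChain.tail h

omit [DecidableEq α] in
lemma rw_pref {w p : List (α × Bool)} (h : RW w) (hp : p <+: w) : RW p :=
  List.IsChain.prefix h hp

lemma rw_iff {w : List (α × Bool)} : RW w ↔ reduce w = w := by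
  constructor
  · intro h
    induction w with
    | nil => rfl
    | cons a l ih =>
      have hl : reduce l = l := ih h.tail
      rw [reduce.cons, hl]
      cases l with
      | nil => rfl
      | cons b t =>
        have hthis : ¬ Cl a b := (List.isChain_cons_cons.1 h).1
        simp only [Cl] at hthis
        show (if a.1 = b.1 ∧ a.2 = !b.2 then t else a :: b :: t) = a :: b :: t
        rw [if_neg hthis]
  · intro h
    induction w with
    | nil => exact List.isChain_nil
    | cons a l ih =>
      have hred : Red l (reduce l) := reduce.red
      have hlen : (reduce l).length ≤ l.length := Red.length_le hred
      rw [reduce.cons] at h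
      rcases hrl : reduce l with _ | ⟨b, t⟩
      · rw [hrl] at h
        have h' : [a] = a :: l := h
        have : l = [] := by simpa using h'.symm
        subst this
        exact List.isChain_singleton _
      · rw [hrl] at h
        have h' : (if a.1 = b.1 ∧ a.2 = !b.2 then t else a :: b :: t) = a :: l := h
        by_cases hc : a.1 = b.1 ∧ a.2 = !b.2
        · rw [if_pos hc] at h'
          exfalso
          have h2 : l.length + 1 ≤ t.length := by rw [h']; simp
          rw [hrl] at hlen; simp at hlen
          omega
        · rw [if_neg hc] at h'
          have hl : l = b :: t := by simpa using h'.symm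
          have hrr : reduce l = l := by rw [hrl, hl]
          have hcl : RW l := ih hrr
          rw [hl]
          refine List.isChain_cons_cons.2 ⟨fun hcc => hc ⟨hcc.1, hcc.2⟩, ?_⟩
          rw [← hl]; exact hcl

lemma rw_toWord (g : FreeGroup α) : RW (toWord g) := rw_iff.2 (reduce_toWord g)

lemma toWord_mk_rw {w : List (α × Bool)} (h : RW w) : (mk w).toWord = w := by
  rw [toWord_mk, rw_iff.1 h]

lemma rw_invRev {w : List (α × Bool)} (h : RW w) : RW (invRev w) := by
  rw [rw_iff] at h ⊢
  rw [reduce_invRev, h]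

omit [DecidableEq α] in
lemma invRev_append (A B : List (α × Bool)) : invRev (A ++ B) = invRev B ++ invRev A := by
  simp [invRev]

omit [DecidableEq α] in
lemma invRev_cons (a : α × Bool) (l : List (α × Bool)) :
    invRev (a :: l) = invRev l ++ [(a.1, !a.2)] := by
  simp [invRev]

omit [DecidableEq α] in
lemma invRev_prefix {A B : List (α × Bool)} (h : A <:+ B) : invRev A <+: invRev B := by
  obtain ⟨p, rfl⟩ := h
  rw [invRev_append]; exact ⟨invRev p, rfl⟩

omit [DecidableEq α] in
lemma suffix_of_invRev_prefix' {A B : List (α × Bool)} (h : A <+: B) : invRev A <:+ invRev B := by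
  obtain ⟨p, rfl⟩ := h
  rw [invRev_append]; exact ⟨invRev p, rfl⟩

omit [DecidableEq α] in
lemma suffix_of_invRev_prefix {A B : List (α × Bool)} (h : invRev A <+: invRev B) : A <:+ B := by
  have := suffix_of_invRev_prefix' h
  simpa [invRev_invRev] using this

lemma suffix_of_suffix_le {β : Type*} {l₁ l₂ l : List β} (h₁ : l₁ <:+ l) (h₂ : l₂ <:+ l)
    (hlen : l₁.length ≤ l₂.length) : l₁ <:+ l₂ := by
  obtain ⟨p₁, rfl⟩ := h₁
  have h1 : l₁ = (p₁ ++ l₁).drop p₁.length := by rw [List.drop_left]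
  obtain ⟨p₂, hp₂⟩ := h₂
  have h2 : l₂ = (p₁ ++ l₁).drop p₂.length := by rw [← hp₂, List.drop_left]
  have hplen : p₂.length ≤ p₁.length := by
    have := congrArg List.length hp₂
    simp at this; omega
  have h3 : List.drop p₁.length (p₁ ++ l₁)
      = List.drop (p₁.length - p₂.length) (List.drop p₂.length (p₁ ++ l₁)) := by
    rw [List.drop_drop]; congr 1; omega
  rw [h1, h2, h3]
  exact List.drop_suffix _ _

lemma prefix_of_prefix_le {β : Type*} {l₁ l₂ l : List β} (h₁ : l₁ <+: l) (h₂ : l₂ <+: l)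
    (hlen : l₁.length ≤ l₂.length) : l₁ <+: l₂ := by
  have h3 := suffix_of_suffix_le (List.reverse_suffix.2 h₁) (List.reverse_suffix.2 h₂) (by simpa)
  exact List.reverse_suffix.1 h3

/-- the key cancellation lemma for products of reduced words -/
lemma cancel (s t : List (α × Bool)) (hs : RW s) (ht : RW t) :
    ∃ a d b, s = a ++ d ∧ t = invRev d ++ b ∧ RW (a ++ b) := by
  by_cases h : RW (s ++ t)
  · exact ⟨s, [], t, by simp, by simp [invRev], h⟩
  · simp only [RW, List.Chain', List.isChain_append] at h
    push_neg at h
    obtain ⟨x, hx, y, hy, hxy⟩ := h hs ht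
    have hsne : s ≠ [] := by rintro rfl; simp at hx
    have htne : t ≠ [] := by rintro rfl; simp at hy
    have hxval : s.getLast? = some x := hx
    have hyval : t.head? = some y := hy
    have hsdec : s.dropLast ++ [x] = s := List.dropLast_append_getLast? x hxval
    have htdec : y :: t.tail = t := by
      cases t with
      | nil => exact absurd rfl htne
      | cons c r => simp at hyval; simp [hyval]
    have hlt : s.dropLast.length < s.length := by
      have : s.length ≠ 0 := fun hh => hsne (List.length_eq_zero_iff.1 hh)
      simp [List.length_dropLast]; omega
    obtain ⟨a, d', b, h1, h2, h3⟩ :=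
      cancel s.dropLast t.tail (rw_pref hs (List.dropLast_prefix s)) (rw_tail ht)
    refine ⟨a, d' ++ [x], b, ?_, ?_, h3⟩
    · rw [← List.append_assoc, ← h1, hsdec]
    · have hy2 : y = (x.1, !x.2) := by
        obtain ⟨hc1, hc2⟩ := hxy
        have hcc : y.2 = !x.2 := by rw [hc2, Bool.not_not]
        cases y; cases x; simp at hc1 hcc ⊢; exact ⟨hc1.symm, hcc⟩
      have hir : invRev (d' ++ [x]) = (x.1, !x.2) :: invRev d' := by
        simp [invRev]
      rw [hir, ← htdec, hy2, h2]
      rfl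
termination_by s.length
decreasing_by exact hlt

/-- the word `v⁻¹ x v` -/
def W (v : List (α × Bool)) (x : α) : List (α × Bool) := invRev v ++ ((x, true) :: v)

/-- the element `v⁻¹ x v` -/
def E (v : List (α × Bool)) (x : α) : FreeGroup α := (mk v)⁻¹ * of x * mk v

omit [DecidableEq α] in
lemma of_eq_mk (x : α) : of x = mk [(x, true)] := rfl

omit [DecidableEq α] in
lemma E_eq_mk (v : List (α × Bool)) (x : α) : E v x = mk (W v x) := by
  rw [E, W, of_eq_mk, inv_mk, mul_mk, mul_mk, List.append_assoc]
  rfl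

omit [DecidableEq α] in
lemma mk_mul_mk (a d b : List (α × Bool)) :
    mk (a ++ d) * mk (invRev d ++ b) = mk (a ++ b) := by
  simp only [← mul_mk, ← inv_mk]
  group

omit [DecidableEq α] in
lemma rw_singleton (a : α × Bool) : RW [a] := List.isChain_singleton _

omit [DecidableEq α] in
lemma mk_cons_true (x : α) (r : List (α × Bool)) :
    mk ((x, true) :: r) = of x * mk r := by
  rw [of_eq_mk, mul_mk]; rfl

omit [DecidableEq α] in
lemma mk_cons_false (x : α) (r : List (α × Bool)) :
    mk ((x, false) :: r) = (of x)⁻¹ * mk r := by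
  have h : ((x, false) :: r) = invRev [(x, true)] ++ r := by simp [invRev]
  rw [h, ← mul_mk, ← inv_mk, ← of_eq_mk]

/-- normalization of a conjugating word -/
lemma normalize {v : List (α × Bool)} {x : α} (h : ¬ RW (W v x)) :
    ∃ v', v'.length < v.length ∧ E v' x = E v x := by
  by_cases hred : reduce v = v
  · have hrwv : RW v := rw_iff.2 hred
    cases v with
    | nil => exact absurd (rw_singleton ((x, true) : α × Bool)) h
    | cons hd r =>
      have key : hd = (x, true) ∨ hd = (x, false) := by
        simp only [W, RW, List.Chain', List.isChain_append] at h
        push_neg at h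
        by_cases hQ : List.Chain' (fun a b : α × Bool => ¬ Cl a b) ((x, true) :: hd :: r)
        · obtain ⟨x', hx', y', hy', hxy⟩ := h (rw_invRev hrwv) hQ
          simp only [List.head?_cons, Option.mem_some_iff] at hy'
          have hgl : (invRev (hd :: r)).getLast? = some (hd.1, !hd.2) := by
            rw [show invRev (hd :: r) = invRev r ++ [(hd.1, !hd.2)] by simp [invRev]]
            exact List.getLast?_concat
          rw [hgl] at hx'
          simp only [Option.mem_some_iff] at hx'
          subst hx'
          rw [← hy'] at hxy
          obtain ⟨h1, h2⟩ := hxy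
          simp only at h1 h2
          left
          have hb2 : hd.2 = true := by
            cases hb : hd.2 <;> simp [hb] at h2 ⊢
          cases hd; simp_all
        · right
          simp only [List.Chain', List.isChain_cons_cons] at hQ
          push_neg at hQ
          have hcl : Cl (x, true) hd := not_not.1 (fun hn => hQ hn hrwv)
          obtain ⟨h1, h2⟩ := hcl
          simp only at h1 h2
          cases hd
          simp_all
      refine ⟨r, by simp, ?_⟩
      rcases key with rfl | rfl
      · rw [E, E, mk_cons_true]; group
      · rw [E, E, mk_cons_false]; group
  · refine ⟨reduce v, ?_, ?_⟩
    · have hr : Red v (reduce v) := reduce.red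
      rcases Relation.ReflTransGen.cases_head hr with heq | ⟨c, hstep, hrest⟩
      · exact absurd heq.symm hred
      · have h1 : c.length + 2 = v.length := Red.Step.length hstep
        have h2 : (reduce v).length ≤ c.length := Red.length_le hrest
        omega
    · rw [E, E, reduce.self]

omit [DecidableEq α] in
lemma rw_all_true {w : List (α × Bool)} (h : ∀ a ∈ w, a.2 = true) : RW w := by
  induction w with
  | nil => exact List.isChain_nil
  | cons a l ih =>
    refine List.isChain_cons.2 ⟨?_, ih fun b hb => h b (List.mem_cons_of_mem _ hb)⟩
    intro b hb hcl
    have hbl : b ∈ l := by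
      cases l with
      | nil => simp at hb
      | cons c r => simp at hb; simp [hb]
    have h1 : a.2 = true := h a List.mem_cons_self
    have h2 : b.2 = true := h b (List.mem_cons_of_mem _ hbl)
    rw [Cl, h1, h2] at hcl
    simp at hcl

omit [DecidableEq α] in
lemma prod_map_of (l : List α) : (l.map of).prod = mk (l.map fun a => (a, true)) := by
  induction l with
  | nil => simp [one_eq_mk]
  | cons a l ih =>
    simp only [List.map_cons, List.prod_cons, ih, of_eq_mk, mul_mk]
    rfl

end HurwitzAux

namespace HurwitzAux

variable {G : Type*} [Group G] {n : ℕ}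

/-- the inverse Hurwitz move -/
def invMove (i : Fin (n - 1)) (g : Fin n → G) : Fin n → G := fun k =>
  if k = finLo i then g (finLo i) * g (finHi i) * (g (finLo i))⁻¹
  else if k = finHi i then g (finLo i)
  else g k

lemma lo_ne_hi (i : Fin (n - 1)) : finLo (n := n) i ≠ finHi i := by
  simp [finLo, finHi, Fin.ext_iff]

lemma move_invMove (i : Fin (n - 1)) (g : Fin n → G) :
    hurwitzMove i (invMove i g) = g := by
  funext k
  by_cases h1 : k = finLo i
  · subst h1; simp [hurwitzMove, invMove, lo_ne_hi i, (lo_ne_hi i).symm]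
  · by_cases h2 : k = finHi i
    · subst h2; simp [hurwitzMove, invMove, lo_ne_hi i, (lo_ne_hi i).symm]; group
    · simp [hurwitzMove, invMove, h1, h2]

lemma invMove_move (i : Fin (n - 1)) (g : Fin n → G) :
    invMove i (hurwitzMove i g) = g := by
  funext k
  by_cases h1 : k = finLo i
  · subst h1; simp [hurwitzMove, invMove, lo_ne_hi i, (lo_ne_hi i).symm]; group
  · by_cases h2 : k = finHi i
    · subst h2; simp [hurwitzMove, invMove, lo_ne_hi i, (lo_ne_hi i).symm]
    · simp [hurwitzMove, invMove, h1, h2]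

lemma move_lo (i : Fin (n - 1)) (g : Fin n → G) :
    hurwitzMove i g (finLo i) = g (finHi i) := by
  simp [hurwitzMove]

lemma move_hi (i : Fin (n - 1)) (g : Fin n → G) :
    hurwitzMove i g (finHi i) = (g (finHi i))⁻¹ * g (finLo i) * g (finHi i) := by
  simp [hurwitzMove, (lo_ne_hi i).symm]

lemma move_other (i : Fin (n - 1)) (g : Fin n → G) {k : Fin n} (h1 : k ≠ finLo i)
    (h2 : k ≠ finHi i) : hurwitzMove i g k = g k := by
  simp [hurwitzMove, h1, h2]

lemma invMove_lo (i : Fin (n - 1)) (g : Fin n → G) :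
    invMove i g (finLo i) = g (finLo i) * g (finHi i) * (g (finLo i))⁻¹ := by
  simp [invMove]

lemma invMove_hi (i : Fin (n - 1)) (g : Fin n → G) :
    invMove i g (finHi i) = g (finLo i) := by
  simp [invMove, (lo_ne_hi i).symm]

lemma invMove_other (i : Fin (n - 1)) (g : Fin n → G) {k : Fin n} (h1 : k ≠ finLo i)
    (h2 : k ≠ finHi i) : invMove i g k = g k := by
  simp [invMove, h1, h2]

lemma prod_set_set : ∀ (l : List G) (j : ℕ) (hj : j + 1 < l.length),
    ((l.set j (l[j + 1]'hj)).set (j + 1)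
      ((l[j + 1]'hj)⁻¹ * (l[j]'(by omega)) * (l[j + 1]'hj))).prod = l.prod := by
  intro l j
  induction j generalizing l with
  | zero =>
    match l with
    | [] => intro hj; simp at hj
    | [c] => intro hj; simp at hj
    | c1 :: c2 :: l2 =>
      intro hj
      simp only [List.getElem_cons_succ, List.getElem_cons_zero, List.set_cons_zero,
        List.set_cons_succ, List.prod_cons]
      group
  | succ j ih =>
    match l with
    | [] => intro hj; simp at hj
    | c :: l' =>
      intro hj
      simp only [List.getElem_cons_succ, List.set_cons_succ, List.prod_cons]
      rw [ih l' (by simpa using hj)]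

lemma prod_set_set' : ∀ (l : List G) (j : ℕ) (hj : j + 1 < l.length),
    ((l.set j ((l[j]'(by omega)) * (l[j + 1]'hj) * (l[j]'(by omega))⁻¹)).set (j + 1)
      (l[j]'(by omega))).prod = l.prod := by
  intro l j
  induction j generalizing l with
  | zero =>
    match l with
    | [] => intro hj; simp at hj
    | [c] => intro hj; simp at hj
    | c1 :: c2 :: l2 =>
      intro hj
      simp only [List.getElem_cons_succ, List.getElem_cons_zero, List.set_cons_zero,
        List.set_cons_succ, List.prod_cons]
      group
  | succ j ih =>
    match l with
    | [] => intro hj; simp at hj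
    | c :: l' =>
      intro hj
      simp only [List.getElem_cons_succ, List.set_cons_succ, List.prod_cons]
      rw [ih l' (by simpa using hj)]

lemma ofFn_hurwitz (i : Fin (n - 1)) (g : Fin n → G) :
    List.ofFn (hurwitzMove i g) =
      ((List.ofFn g).set i (g (finHi i))).set ((i : ℕ) + 1)
        ((g (finHi i))⁻¹ * g (finLo i) * g (finHi i)) := by
  have hin : (i : ℕ) + 1 < n := by have := i.isLt; omega
  apply List.ext_getElem
  · simp
  · intro j h1 h2
    simp only [List.getElem_set, List.getElem_ofFn]
    have hj : j < n := by simpa using h1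
    by_cases hji : j = (i : ℕ)
    · subst hji
      rw [if_neg (by omega), if_pos rfl]
      show hurwitzMove i g ⟨(i : ℕ), hj⟩ = _
      have he : (⟨(i : ℕ), hj⟩ : Fin n) = finLo i := rfl
      rw [he]
      simp [hurwitzMove]
    · by_cases hji1 : j = (i : ℕ) + 1
      · subst hji1
        rw [if_pos rfl]
        show hurwitzMove i g ⟨(i : ℕ) + 1, hj⟩ = _
        have he : (⟨(i : ℕ) + 1, hj⟩ : Fin n) = finHi i := rfl
        rw [he]
        simp [hurwitzMove, (lo_ne_hi i).symm]
      · rw [if_neg (by omega), if_neg (by omega)]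
        show hurwitzMove i g ⟨j, hj⟩ = g ⟨j, hj⟩
        have hne1 : (⟨j, hj⟩ : Fin n) ≠ finLo i := by simp [finLo, Fin.ext_iff]; omega
        have hne2 : (⟨j, hj⟩ : Fin n) ≠ finHi i := by simp [finHi, Fin.ext_iff]; omega
        simp [hurwitzMove, hne1, hne2]

lemma ofFn_invMove (i : Fin (n - 1)) (g : Fin n → G) :
    List.ofFn (invMove i g) =
      ((List.ofFn g).set i (g (finLo i) * g (finHi i) * (g (finLo i))⁻¹)).set ((i : ℕ) + 1)
        (g (finLo i)) := by
  have hin : (i : ℕ) + 1 < n := by have := i.isLt; omega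
  apply List.ext_getElem
  · simp
  · intro j h1 h2
    simp only [List.getElem_set, List.getElem_ofFn]
    have hj : j < n := by simpa using h1
    by_cases hji : j = (i : ℕ)
    · subst hji
      rw [if_neg (by omega), if_pos rfl]
      show invMove i g ⟨(i : ℕ), hj⟩ = _
      have he : (⟨(i : ℕ), hj⟩ : Fin n) = finLo i := rfl
      rw [he]
      simp [invMove]
    · by_cases hji1 : j = (i : ℕ) + 1
      · subst hji1
        rw [if_pos rfl]
        show invMove i g ⟨(i : ℕ) + 1, hj⟩ = _
        have he : (⟨(i : ℕ) + 1, hj⟩ : Fin n) = finHi i := rfl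
        rw [he]
        simp [invMove, (lo_ne_hi i).symm]
      · rw [if_neg (by omega), if_neg (by omega)]
        show invMove i g ⟨j, hj⟩ = g ⟨j, hj⟩
        have hne1 : (⟨j, hj⟩ : Fin n) ≠ finLo i := by simp [finLo, Fin.ext_iff]; omega
        have hne2 : (⟨j, hj⟩ : Fin n) ≠ finHi i := by simp [finHi, Fin.ext_iff]; omega
        simp [invMove, hne1, hne2]

lemma prod_hurwitzMove (i : Fin (n - 1)) (g : Fin n → G) :
    (List.ofFn (hurwitzMove i g)).prod = (List.ofFn g).prod := by
  have hin : (i : ℕ) + 1 < n := by have := i.isLt; omega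
  have hlen : (i : ℕ) + 1 < (List.ofFn g).length := by simpa using hin
  have hgj : (List.ofFn g)[(i : ℕ)]'(by omega) = g (finLo i) := by
    rw [List.getElem_ofFn]; rfl
  have hgj1 : (List.ofFn g)[(i : ℕ) + 1]'hlen = g (finHi i) := by
    rw [List.getElem_ofFn]; rfl
  rw [ofFn_hurwitz, ← hgj, ← hgj1]
  exact prod_set_set _ _ hlen

lemma prod_invMove (i : Fin (n - 1)) (g : Fin n → G) :
    (List.ofFn (invMove i g)).prod = (List.ofFn g).prod := by
  have hin : (i : ℕ) + 1 < n := by have := i.isLt; omega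
  have hlen : (i : ℕ) + 1 < (List.ofFn g).length := by simpa using hin
  have hgj : (List.ofFn g)[(i : ℕ)]'(by omega) = g (finLo i) := by
    rw [List.getElem_ofFn]; rfl
  have hgj1 : (List.ofFn g)[(i : ℕ) + 1]'hlen = g (finHi i) := by
    rw [List.getElem_ofFn]; rfl
  rw [ofFn_invMove, ← hgj, ← hgj1]
  exact prod_set_set' _ _ hlen

end HurwitzAux

end HurwitzAux

namespace HurwitzAux
open FreeGroup

lemma sum_update_len {n : ℕ} {β : Type*} (v : Fin n → List β) (k : Fin n) (w : List β) :
    (∑ j, ((Function.update v k w) j).length) + (v k).length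
      = (∑ j, (v j).length) + w.length := by
  have h1 : (fun j => ((Function.update v k w) j).length)
      = Function.update (fun j => (v j).length) k w.length := by
    funext j
    by_cases h : j = k
    · subst h; simp
    · simp [Function.update_of_ne h]
  rw [h1, Finset.sum_update_of_mem (Finset.mem_univ k),
    Finset.sum_eq_sum_sdiff_singleton_add (Finset.mem_univ k) (fun j => (v j).length)]
  omega

lemma key {m n : ℕ} (u : Fin n → FreeGroup (Fin m)) (sfun : Fin n → Fin m)
    (hus : ∀ k, u k = FreeGroup.of (sfun k))
    (ρ : BraidGroup n →* Equiv.Perm (Fin n → FreeGroup (Fin m)))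
    (hρ : ∀ (i : Fin (n - 1)) (g : Fin n → FreeGroup (Fin m)),
      ρ (braidGen i) g = hurwitzMove i g) :
    ∀ N : ℕ, ∀ (v : Fin n → List (Fin m × Bool)) (x : Fin n → Fin m)
      (f : Fin n → FreeGroup (Fin m)),
      (∀ k, f k = E (v k) (x k)) → (∑ k, (v k).length) = N →
      (List.ofFn f).prod = (List.ofFn u).prod → ∃ b : BraidGroup n, ρ b u = f := by
  have huword : FreeGroup.toWord ((List.ofFn u).prod)
      = List.ofFn (fun k => (sfun k, true)) := by
    have h0 : u = fun k => FreeGroup.of (sfun k) := funext hus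
    have h1 : List.ofFn u = (List.ofFn sfun).map FreeGroup.of := by
      rw [List.map_ofFn, h0]; rfl
    rw [h1, prod_map_of, List.map_ofFn]
    have h2 : ((fun a => (a, true)) ∘ sfun) = fun k => (sfun k, true) := rfl
    rw [h2]
    refine toWord_mk_rw (rw_all_true ?_)
    intro a ha
    rw [List.mem_ofFn] at ha
    obtain ⟨k, hk⟩ := ha
    rw [← hk]
  intro N
  induction N using Nat.strong_induction_on with
  | _ N IH =>
  intro v x f hf hN hprod
  by_cases hnorm : ∀ k, RW (W (v k) (x k))
  · by_cases hmove : ∃ i : Fin (n - 1),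
        (∃ z, v (finLo i) = z ++ ((x (finHi i), false) :: v (finHi i))) ∨
        (∃ z, v (finHi i) = z ++ ((x (finLo i), true) :: v (finLo i)))
    · obtain ⟨i, hi⟩ := hmove
      have hne : finLo (n := n) i ≠ finHi i := lo_ne_hi i
      rcases hi with ⟨z, hz⟩ | ⟨z, hz⟩
      · -- case A : apply σ_i
        set f' := hurwitzMove i f with hf'def
        set v' := Function.update (Function.update v (finLo i) (v (finHi i))) (finHi i)
          (z ++ v (finHi i)) with hv'def
        set x' := Function.update (Function.update x (finLo i) (x (finHi i))) (finHi i)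
          (x (finLo i)) with hx'def
        have hmk : FreeGroup.mk (v (finLo i)) * E (v (finHi i)) (x (finHi i))
            = FreeGroup.mk (z ++ v (finHi i)) := by
          have h1 : FreeGroup.mk (z ++ ((x (finHi i), false) :: v (finHi i)))
              = FreeGroup.mk z * ((FreeGroup.of (x (finHi i)))⁻¹ * FreeGroup.mk (v (finHi i))) := by
            rw [← mk_cons_false, mul_mk]
          rw [hz, h1, E, ← mul_mk]
          group
        have hf'forms : ∀ k, f' k = E (v' k) (x' k) := by
          intro k
          by_cases h1 : k = finLo i
          · subst h1
            rw [hf'def, move_lo, hv'def, hx'def, Function.update_of_ne hne,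
              Function.update_of_ne hne, Function.update_self, Function.update_self]
            exact hf _
          · by_cases h2 : k = finHi i
            · subst h2
              rw [hf'def, move_hi, hf (finLo i), hf (finHi i), hv'def, hx'def,
                Function.update_self, Function.update_self]
              have h3 : E (z ++ v (finHi i)) (x (finLo i))
                  = (FreeGroup.mk (v (finLo i)) * E (v (finHi i)) (x (finHi i)))⁻¹
                    * FreeGroup.of (x (finLo i))
                    * (FreeGroup.mk (v (finLo i)) * E (v (finHi i)) (x (finHi i))) := by
                rw [hmk, E]
              rw [h3, E, E]
              group
            · rw [hf'def, move_other i f h1 h2, hv'def, hx'def,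
                Function.update_of_ne h2, Function.update_of_ne h1,
                Function.update_of_ne h2, Function.update_of_ne h1]
              exact hf k
        have hs1 := sum_update_len (Function.update v (finLo i) (v (finHi i))) (finHi i)
          (z ++ v (finHi i))
        have hs2 := sum_update_len v (finLo i) (v (finHi i))
        have hlen1 : (Function.update v (finLo i) (v (finHi i)) (finHi i)).length
            = (v (finHi i)).length := by rw [Function.update_of_ne hne.symm]
        have hzlen : (v (finLo i)).length = z.length + 1 + (v (finHi i)).length := by
          rw [hz]; simp; omega
        have hzlen2 : (z ++ v (finHi i)).length = z.length + (v (finHi i)).length := by simp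
        have hsum : (∑ j, (v' j).length) + 1 = N := by
          rw [hv'def]
          omega
        obtain ⟨b', hb'⟩ := IH (∑ j, (v' j).length) (by omega) v' x' f' hf'forms rfl
          (by rw [hf'def, prod_hurwitzMove]; exact hprod)
        refine ⟨(braidGen i)⁻¹ * b', ?_⟩
        rw [_root_.map_mul, _root_.map_inv, Equiv.Perm.mul_apply, hb', hf'def, ← hρ i f]
        exact Equiv.symm_apply_apply _ _
      · -- case B : apply σ_i⁻¹
        set f' := invMove i f with hf'def
        set v' := Function.update (Function.update v (finLo i) (z ++ v (finLo i))) (finHi i)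
          (v (finLo i)) with hv'def
        set x' := Function.update (Function.update x (finLo i) (x (finHi i))) (finHi i)
          (x (finLo i)) with hx'def
        have hmk : FreeGroup.mk (v (finHi i)) * (E (v (finLo i)) (x (finLo i)))⁻¹
            = FreeGroup.mk (z ++ v (finLo i)) := by
          have h1 : FreeGroup.mk (z ++ ((x (finLo i), true) :: v (finLo i)))
              = FreeGroup.mk z * (FreeGroup.of (x (finLo i)) * FreeGroup.mk (v (finLo i))) := by
            rw [← mk_cons_true, mul_mk]
          rw [hz, h1, E, ← mul_mk]
          group
        have hf'forms : ∀ k, f' k = E (v' k) (x' k) := by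
          intro k
          by_cases h1 : k = finLo i
          · subst h1
            rw [hf'def, invMove_lo, hf (finLo i), hf (finHi i), hv'def, hx'def,
              Function.update_of_ne hne, Function.update_of_ne hne,
              Function.update_self, Function.update_self]
            have h3 : E (z ++ v (finLo i)) (x (finHi i))
                = (FreeGroup.mk (v (finHi i)) * (E (v (finLo i)) (x (finLo i)))⁻¹)⁻¹
                  * FreeGroup.of (x (finHi i))
                  * (FreeGroup.mk (v (finHi i)) * (E (v (finLo i)) (x (finLo i)))⁻¹) := by
              rw [hmk, E]
            rw [h3, E, E]
            group
          · by_cases h2 : k = finHi i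
            · subst h2
              rw [hf'def, invMove_hi, hv'def, hx'def, Function.update_self,
                Function.update_self]
              exact hf _
            · rw [hf'def, invMove_other i f h1 h2, hv'def, hx'def,
                Function.update_of_ne h2, Function.update_of_ne h1,
                Function.update_of_ne h2, Function.update_of_ne h1]
              exact hf k
        have hs1 := sum_update_len (Function.update v (finLo i) (z ++ v (finLo i))) (finHi i)
          (v (finLo i))
        have hs2 := sum_update_len v (finLo i) (z ++ v (finLo i))
        have hlen1 : (Function.update v (finLo i) (z ++ v (finLo i)) (finHi i)).length
            = (v (finHi i)).length := by rw [Function.update_of_ne hne.symm]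
        have hzlen : (v (finHi i)).length = z.length + 1 + (v (finLo i)).length := by
          rw [hz]; simp; omega
        have hzlen2 : (z ++ v (finLo i)).length = z.length + (v (finLo i)).length := by simp
        have hsum : (∑ j, (v' j).length) + 1 = N := by
          rw [hv'def]
          omega
        obtain ⟨b', hb'⟩ := IH (∑ j, (v' j).length) (by omega) v' x' f' hf'forms rfl
          (by rw [hf'def, prod_invMove]; exact hprod)
        refine ⟨braidGen i * b', ?_⟩
        rw [_root_.map_mul, Equiv.Perm.mul_apply, hb', hρ i, hf'def, move_invMove]
    · -- no decreasing move : all conjugators must be empty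
      by_cases hall : ∀ k, v k = []
      · have hfx : ∀ k, f k = FreeGroup.of (x k) := by
          intro k
          rw [hf k, hall k, E]
          have : FreeGroup.mk ([] : List (Fin m × Bool)) = 1 := FreeGroup.one_eq_mk.symm
          rw [this]
          group
        have hfword : List.ofFn f = (List.ofFn x).map FreeGroup.of := by
          rw [List.map_ofFn]; exact congrArg _ (funext hfx)
        have h2 : FreeGroup.mk (List.ofFn (fun k => (x k, true)))
            = FreeGroup.mk (List.ofFn (fun k => (sfun k, true))) := by
          have h3 := hprod
          rw [hfword, prod_map_of, List.map_ofFn] at h3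
          have h4 : ((fun a => (a, true)) ∘ x) = fun k => (x k, true) := rfl
          rw [h4] at h3
          rw [h3, ← mk_toWord (x := (List.ofFn u).prod), huword]
        have hxs : ∀ k, x k = sfun k := by
          have h3 := congrArg FreeGroup.toWord h2
          rw [toWord_mk_rw (rw_all_true ?_), toWord_mk_rw (rw_all_true ?_)] at h3
          · have h4 := List.ofFn_inj.1 h3
            intro k
            have h5 := congrFun h4 k
            simpa using h5
          · intro a ha; rw [List.mem_ofFn] at ha; obtain ⟨k, hk⟩ := ha; rw [← hk]
          · intro a ha; rw [List.mem_ofFn] at ha; obtain ⟨k, hk⟩ := ha; rw [← hk]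
        refine ⟨1, ?_⟩
        rw [_root_.map_one]
        show u = f
        funext k
        rw [hfx k, hus k, hxs k]
      · -- impossible : the invariant argument
        exfalso
        push_neg at hall
        obtain ⟨k0, hk0⟩ := hall
        push_neg at hmove
        have hnpos : 0 < n := k0.pos
        have claim : ∀ j : ℕ, ∀ (hj : j < n), ∃ p : List (Fin m × Bool),
            FreeGroup.toWord (((List.ofFn f).take (j + 1)).prod)
              = p ++ ((x ⟨j, hj⟩, true) :: v ⟨j, hj⟩) ∧ j ≤ p.length ∧
            ((∃ i' : Fin n, (i' : ℕ) ≤ j ∧ v i' ≠ []) → j + 1 ≤ p.length) := by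
          intro j
          induction j with
          | zero =>
            intro hj
            have hlenf : 0 < (List.ofFn f).length := by simp; omega
            have h1 : ((List.ofFn f).take 1).prod = f ⟨0, hj⟩ := by
              rw [List.prod_take_succ _ 0 hlenf]
              simp [List.getElem_ofFn]
            refine ⟨FreeGroup.invRev (v ⟨0, hj⟩), ?_, by omega, ?_⟩
            · rw [h1, hf, E_eq_mk, toWord_mk_rw (hnorm _)]
              rfl
            · rintro ⟨i', hle, hne'⟩
              have hi0 : i' = ⟨0, hj⟩ := by
                apply Fin.ext; simpa using hle
              subst hi0
              rw [FreeGroup.invRev_length]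
              have := List.length_pos_iff.2 hne'
              omega
          | succ j ihj =>
            intro hj1
            have hjn : j < n := by omega
            obtain ⟨p, hp, hple, hbump⟩ := ihj hjn
            set K : Fin n := ⟨j, hjn⟩ with hK
            set K1 : Fin n := ⟨j + 1, hj1⟩ with hK1
            set i : Fin (n - 1) := ⟨j, by omega⟩ with hidef
            have hKlo : finLo (n := n) i = K := rfl
            have hKhi : finHi (n := n) i = K1 := rfl
            have notA : ¬ ∃ z, v K = z ++ ((x K1, false) :: v K1) := by
              rintro ⟨z, hzz⟩
              exact (hmove i).1 z hzz
            have notB : ¬ ∃ z, v K1 = z ++ ((x K, true) :: v K) := by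
              rintro ⟨z, hzz⟩
              exact (hmove i).2 z hzz
            -- the two reduced words
            have hrwS : RW (p ++ ((x K, true) :: v K)) := by
              rw [← hp]; exact rw_toWord _
            obtain ⟨a, d, b, hS, hT, hab⟩ :=
              cancel (p ++ ((x K, true) :: v K)) (W (v K1) (x K1)) hrwS (hnorm K1)
            have hlen2 : j + 1 < (List.ofFn f).length := by simp; omega
            have hstep : ((List.ofFn f).take (j + 2)).prod
                = ((List.ofFn f).take (j + 1)).prod * f K1 := by
              rw [List.prod_take_succ _ (j + 1) hlen2]
              congr 1
              rw [List.getElem_ofFn]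
            have hPmk : ((List.ofFn f).take (j + 1)).prod
                = FreeGroup.mk (p ++ ((x K, true) :: v K)) := by
              rw [← hp, mk_toWord]
            have hword : FreeGroup.toWord (((List.ofFn f).take (j + 2)).prod) = a ++ b := by
              rw [hstep, hPmk, hf K1, E_eq_mk, hS]
              rw [show W (v K1) (x K1) = FreeGroup.invRev d ++ b from hT]
              rw [mk_mul_mk]
              exact toWord_mk_rw hab
            -- suffix / prefix facts
            have hdS : d <:+ (p ++ ((x K, true) :: v K)) := ⟨a, hS.symm⟩
            have hvKS : ((x K, true) :: v K) <:+ (p ++ ((x K, true) :: v K)) := ⟨p, rfl⟩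
            have hvKS' : v K <:+ (p ++ ((x K, true) :: v K)) := by
              refine ⟨p ++ [(x K, true)], ?_⟩
              simp
            have hirT : FreeGroup.invRev d <+: W (v K1) (x K1) := ⟨b, hT.symm⟩
            have hirT' : FreeGroup.invRev (v K1) <+: W (v K1) (x K1) :=
              ⟨(x K1, true) :: v K1, rfl⟩
            -- D2 : contradiction whenever the cancelled part is long on both sides
            have D2 : (v K).length + 1 ≤ d.length → (v K).length + 1 ≤ (v K1).length → False := by
              intro hq hq'
              have hxd : ((x K, true) :: v K) <:+ d :=
                suffix_of_suffix_le hvKS hdS (by simpa using hq)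
              set w'' := (v K1).drop ((v K1).length - ((v K).length + 1)) with hw''
              have hw''suf : w'' <:+ v K1 := List.drop_suffix _ _
              have hw''len : w''.length = (v K).length + 1 := by
                rw [hw'', List.length_drop]; omega
              have h5 : FreeGroup.invRev w'' <+: W (v K1) (x K1) :=
                (invRev_prefix hw''suf).trans hirT'
              have h6 : FreeGroup.invRev w'' <+: FreeGroup.invRev d :=
                prefix_of_prefix_le h5 hirT
                  (by rw [FreeGroup.invRev_length, FreeGroup.invRev_length]; omega)
              have h7 : w'' <:+ d := suffix_of_invRev_prefix h6
              have h8 : w'' = (x K, true) :: v K := by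
                refine (suffix_of_suffix_le h7 hxd (by simp [hw''len])).eq_of_length ?_
                simp [hw''len]
              rw [h8] at hw''suf
              obtain ⟨z, hzz⟩ := hw''suf
              exact (notB ⟨z, hzz.symm⟩).elim
            -- main case analysis on d.length
            by_cases hdq : d.length ≤ (v K).length ∧ d.length ≤ (v K1).length
            · obtain ⟨hdq1, hdq2⟩ := hdq
              -- d is a suffix of both v K and v K1
              have hd1 : d <:+ v K := suffix_of_suffix_le hdS hvKS' (by omega)
              obtain ⟨w₁, hw₁⟩ := hd1
              have ha' : a = p ++ ((x K, true) :: w₁) := by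
                have h9 : p ++ ((x K, true) :: v K) = (p ++ ((x K, true) :: w₁)) ++ d := by
                  rw [← hw₁]; simp
                rw [h9] at hS
                exact (List.append_cancel_right hS.symm)
              have hd2 : FreeGroup.invRev d <+: FreeGroup.invRev (v K1) :=
                prefix_of_prefix_le hirT hirT'
                  (by rw [FreeGroup.invRev_length, FreeGroup.invRev_length]; omega)
              have hd2' : d <:+ v K1 := suffix_of_invRev_prefix hd2
              obtain ⟨w₂, hw₂⟩ := hd2'
              have hb' : b = FreeGroup.invRev w₂ ++ ((x K1, true) :: v K1) := by
                have h9 : W (v K1) (x K1)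
                    = FreeGroup.invRev d ++ (FreeGroup.invRev w₂ ++ ((x K1, true) :: v K1)) := by
                  rw [W, ← hw₂, invRev_append]
                  simp
                rw [h9] at hT
                exact (List.append_cancel_left hT).symm
              refine ⟨p ++ ((x K, true) :: (w₁ ++ FreeGroup.invRev w₂)), ?_, ?_, ?_⟩
              · rw [hword, ha', hb']
                simp
              · simp; omega
              · rintro ⟨i', hle, hne'⟩
                by_cases hprev : ∃ i'' : Fin n, (i'' : ℕ) ≤ j ∧ v i'' ≠ []
                · have := hbump hprev
                  simp
                  omega
                · have hi' : (i' : ℕ) = j + 1 := by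
                    rcases Nat.lt_or_ge (i' : ℕ) (j + 1) with hlt | hge
                    · exact absurd ⟨i', by omega, hne'⟩ hprev
                    · omega
                  have hii : i' = K1 := Fin.ext hi'
                  rw [hii] at hne'
                  have hvk1pos : 0 < (v K1).length := List.length_pos_iff.2 hne'
                  have hvK : v K = [] := by
                    by_contra hvv
                    exact hprev ⟨K, by simp [hK], hvv⟩
                  have hq0 : (v K).length = 0 := by rw [hvK]; rfl
                  have hd0 : d.length = 0 := by omega
                  have hw₂len : (v K1).length = w₂.length + d.length := by
                    rw [← hw₂]; simp
                  simp [FreeGroup.invRev_length]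
                  omega
            · -- d is long on one side : derive a contradiction
              rcases Nat.lt_or_ge (v K1).length d.length with hq' | hq'
              · -- d.length ≥ q' + 1 : S ends with (x K1, false) :: v K1
                have h5 : (FreeGroup.invRev (v K1) ++ [(x K1, true)]) <+: W (v K1) (x K1) := by
                  refine ⟨v K1, ?_⟩
                  rw [W]; simp
                have h6 : (FreeGroup.invRev (v K1) ++ [(x K1, true)]) <+: FreeGroup.invRev d :=
                  prefix_of_prefix_le h5 hirT
                    (by simp [FreeGroup.invRev_length]; omega)
                have h7 : FreeGroup.invRev (v K1) ++ [(x K1, true)]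
                    = FreeGroup.invRev ((x K1, false) :: v K1) := by
                  rw [invRev_cons]
                  rfl
                have h8 : ((x K1, false) :: v K1) <:+ d := by
                  rw [h7] at h6
                  exact suffix_of_invRev_prefix h6
                have h9 : ((x K1, false) :: v K1) <:+ (p ++ ((x K, true) :: v K)) :=
                  h8.trans hdS
                rcases Nat.lt_or_ge (v K1).length (v K).length with hqq | hqq
                · -- q' < q : condition A holds, contradiction
                  have h10 : ((x K1, false) :: v K1) <:+ v K :=
                    suffix_of_suffix_le h9 hvKS' (by simp; omega)
                  obtain ⟨z, hzz⟩ := h10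
                  exact (notA ⟨z, hzz.symm⟩).elim
                · rcases Nat.eq_or_lt_of_le hqq with hqe | hqlt
                  · -- q' = q : head clash
                    have h10 : ((x K1, false) :: v K1) = ((x K, true) :: v K) := by
                      refine (suffix_of_suffix_le h9 hvKS (by simp; omega)).eq_of_length ?_
                      simp; omega
                    simp at h10
                  · -- q' > q : D2
                    exact (D2 (by omega) (by omega)).elim
              · -- d.length ≤ q' but d.length > q : D2
                have hdq1 : ¬ d.length ≤ (v K).length := by
                  intro hc; exact hdq ⟨hc, hq'⟩
                exact (D2 (by omega) (by omega)).elim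
        -- final contradiction
        obtain ⟨p, hp, hple, hbump⟩ := claim (n - 1) (by omega)
        have hfull : (List.ofFn f).take ((n - 1) + 1) = List.ofFn f := by
          rw [show n - 1 + 1 = n by omega]
          apply List.take_of_length_le
          simp
        rw [hfull, hprod, huword] at hp
        have hlen1 := congrArg List.length hp
        simp at hlen1
        have hple2 : n ≤ p.length := by
          rw [show n = (n - 1) + 1 by omega]
          exact hbump ⟨k0, by omega, hk0⟩
        omega
  · -- normalization step
    push_neg at hnorm
    obtain ⟨k0, hk0⟩ := hnorm
    obtain ⟨v0, hv0len, hv0E⟩ := normalize hk0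
    have hupd := sum_update_len v k0 v0
    refine IH (∑ j, ((Function.update v k0 v0) j).length) (by omega)
      (Function.update v k0 v0) x f ?_ rfl hprod
    intro k
    by_cases hk : k = k0
    · subst hk
      rw [Function.update_self]
      exact (hf k).trans hv0E.symm
    · rw [Function.update_of_ne hk]
      exact hf k

end HurwitzAux


namespace HurwitzAux

variable {G : Type*} [Group G] {n : ℕ}

/-- property preserved by Hurwitz moves -/
def Pg (u g : Fin n → G) : Prop :=
  (List.ofFn g).prod = (List.ofFn u).prod ∧
    ∃ τ : Equiv.Perm (Fin n), ∀ k, IsConj (u (τ k)) (g k)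

lemma Pg_move (u : Fin n → G) (i : Fin (n - 1)) (g : Fin n → G) (h : Pg u g) :
    Pg u (hurwitzMove i g) := by
  obtain ⟨hp, τ, hτ⟩ := h
  refine ⟨by rw [prod_hurwitzMove]; exact hp, (Equiv.swap (finLo i) (finHi i)).trans τ, ?_⟩
  intro k
  by_cases h1 : k = finLo i
  · subst h1
    rw [move_lo, Equiv.trans_apply, Equiv.swap_apply_left]
    exact hτ (finHi i)
  · by_cases h2 : k = finHi i
    · subst h2
      rw [move_hi, Equiv.trans_apply, Equiv.swap_apply_right]
      refine (hτ (finLo i)).trans ?_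
      rw [isConj_iff]
      exact ⟨(g (finHi i))⁻¹, by group⟩
    · rw [move_other i g h1 h2, Equiv.trans_apply, Equiv.swap_apply_of_ne_of_ne h1 h2]
      exact hτ k

lemma Pg_invMove (u : Fin n → G) (i : Fin (n - 1)) (g : Fin n → G) (h : Pg u g) :
    Pg u (invMove i g) := by
  obtain ⟨hp, τ, hτ⟩ := h
  refine ⟨by rw [prod_invMove]; exact hp, (Equiv.swap (finLo i) (finHi i)).trans τ, ?_⟩
  intro k
  by_cases h1 : k = finLo i
  · subst h1
    rw [invMove_lo, Equiv.trans_apply, Equiv.swap_apply_left]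
    refine (hτ (finHi i)).trans ?_
    rw [isConj_iff]
    exact ⟨g (finLo i), by group⟩
  · by_cases h2 : k = finHi i
    · subst h2
      rw [invMove_hi, Equiv.trans_apply, Equiv.swap_apply_right]
      exact hτ (finLo i)
    · rw [invMove_other i g h1 h2, Equiv.trans_apply, Equiv.swap_apply_of_ne_of_ne h1 h2]
      exact hτ k

lemma Pg_rho {m n : ℕ} (u : Fin n → FreeGroup (Fin m))
    (ρ : BraidGroup n →* Equiv.Perm (Fin n → FreeGroup (Fin m)))
    (hρ : ∀ (i : Fin (n - 1)) (g : Fin n → FreeGroup (Fin m)),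
      ρ (braidGen i) g = hurwitzMove i g) :
    ∀ b : BraidGroup n, ∀ g, Pg u g → Pg u (ρ b g) ∧ Pg u (ρ b⁻¹ g) := by
  intro b
  have hb : b ∈ Subgroup.closure (Set.range (PresentedGroup.of (rels := braidRels n))) := by
    rw [PresentedGroup.closure_range_of]
    exact Subgroup.mem_top b
  refine Subgroup.closure_induction
    (p := fun b _ => ∀ g, Pg u g → Pg u (ρ b g) ∧ Pg u (ρ b⁻¹ g)) ?_ ?_ ?_ ?_ hb
  · rintro c ⟨i, rfl⟩ g hg
    constructor
    · rw [show ρ (PresentedGroup.of i) g = hurwitzMove i g from hρ i g]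
      exact Pg_move u i g hg
    · have h1 : ρ (PresentedGroup.of i) (invMove i g) = g := by
        rw [show ρ (PresentedGroup.of i) (invMove i g) = hurwitzMove i (invMove i g) from
          hρ i _]
        exact move_invMove i g
      have h2 : ρ ((PresentedGroup.of i)⁻¹) g = invMove i g := by
        rw [_root_.map_inv]
        apply (ρ (PresentedGroup.of i)).injective
        exact ((ρ (PresentedGroup.of i)).apply_symm_apply g).trans h1.symm
      rw [h2]
      exact Pg_invMove u i g hg
  · intro g hg
    rw [inv_one, _root_.map_one]
    exact ⟨hg, hg⟩
  · intro a c _ _ iha ihc g hg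
    constructor
    · rw [_root_.map_mul, Equiv.Perm.mul_apply]
      exact (iha (ρ c g) ((ihc g hg).1)).1
    · rw [mul_inv_rev, _root_.map_mul, Equiv.Perm.mul_apply]
      exact (ihc _ ((iha g hg).2)).2
  · intro a _ iha g hg
    refine ⟨(iha g hg).2, ?_⟩
    rw [inv_inv]
    exact (iha g hg).1

end HurwitzAux



/-- **Theorem (orbit description).** Let `F_m` be the free group on `x_1,…,x_m`, `n ≥ 1`,
and `u_1,…,u_n` generators. The orbit of `u` under the Hurwitz action of `B_n` on `F_m^n`
(given by the homomorphism `ρ` with `ρ(σ_i) = hurwitzMove i`) is exactly the set of tuples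
`f` with `f_1⋯f_n = u_1⋯u_n` and such that, for some permutation `τ`, `f_k` is conjugate to
`u_{τ(k)}` for all `k`. -/
theorem hurwitz_orbit_eq {m n : ℕ} (hn : 1 ≤ n)
    (u : Fin n → FreeGroup (Fin m)) (hu : ∀ k, ∃ s, u k = FreeGroup.of s)
    (ρ : BraidGroup n →* Equiv.Perm (Fin n → FreeGroup (Fin m)))
    (hρ : ∀ (i : Fin (n - 1)) (g : Fin n → FreeGroup (Fin m)),
      ρ (braidGen i) g = hurwitzMove i g) :
    {f : Fin n → FreeGroup (Fin m) | ∃ b : BraidGroup n, ρ b u = f} =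
      {f : Fin n → FreeGroup (Fin m) |
        (List.ofFn f).prod = (List.ofFn u).prod ∧
        ∃ τ : Equiv.Perm (Fin n), ∀ k, IsConj (u (τ k)) (f k)} := by
  classical
  ext f
  simp only [Set.mem_setOf_eq]
  constructor
  · rintro ⟨b, rfl⟩
    have hu' : HurwitzAux.Pg u u := by
      refine ⟨rfl, 1, fun k => ?_⟩
      exact IsConj.refl _
    exact (HurwitzAux.Pg_rho u ρ hρ b u hu').1
  · rintro ⟨hprod, τ, hτ⟩
    choose sfun hs using hu
    have hconj : ∀ k, ∃ c : FreeGroup (Fin m), c * FreeGroup.of (sfun (τ k)) * c⁻¹ = f k := by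
      intro k
      have h1 := hτ k
      rw [hs (τ k)] at h1
      exact isConj_iff.1 h1
    choose c hc using hconj
    refine HurwitzAux.key u sfun hs ρ hρ (∑ k, (FreeGroup.toWord (c k)⁻¹).length)
      (fun k => FreeGroup.toWord ((c k)⁻¹)) (fun k => sfun (τ k)) f ?_ ?_ hprod
    · intro k
      rw [HurwitzAux.E, FreeGroup.mk_toWord, ← hc k]
      group
    · rfl
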